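/- arXiv:math/0003076 — 2 statements merged into one kernel-verified Lean document; each statement's English description precedes it below -/
import Mathlib

section
/- Let a,b,c,p be positive integers with a|b, c|b, p|(b/a+1), p|(b/c+1), D=b²−ac>0, let r ∈ ℤ, let s be an integer with s ≡ b/a+1 (mod 2), put Λ={(m,n)∈ℤ²: n≡(b/c+1)m (mod 2)} and 𝐜=(r/p+acs/(2D),1/2), and let ε = (b+√D)/(b−√D) ∈ ℝ. Then ε is a totally positive unit of norm 1 in ℚ(√D) (both ε and (b−√D)/(b+√D) are positive, and ε·(b−√D)/(b+√D)=1), and multiplication by ε preserves the coset Λ+𝐜: the map T(m,n) = ( ((b²+D)m + 2bcn)/(ac), ((b²+D)n + 2b(D/c)m)/(ac) ), which satisfies cT(m,n)₂ + T(m,n)₁√D = ε·(cn+m√D), is a bijection of Λ+𝐜 onto itself, and it preserves the quadratic form Q(m,n) = 2cn² − (2D/c)m². -/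
/-- The coset `Λ + 𝐜 ⊆ ℚ²` where `Λ = {(m,n) ∈ ℤ² : n ≡ (b/c+1)m mod 2}`, `𝐜 = (c₁,1/2)`. -/
def cosetL (b c : ℤ) (c₁ : ℚ) : Set (ℚ × ℚ) :=
  {v | ∃ m n : ℤ, (2 : ℤ) ∣ (n - (b / c + 1) * m) ∧ v = ((m : ℚ) + c₁, (n : ℚ) + 1 / 2)}

/-- The quadratic form `Q(m,n) = 2cn² - (2D/c)m²`, `D = b² - ac`. -/
def Qform (a b c : ℤ) (v : ℚ × ℚ) : ℚ :=
  2 * (c : ℚ) * v.2 ^ 2 - 2 * ((b : ℚ) ^ 2 - (a : ℚ) * (c : ℚ)) / (c : ℚ) * v.1 ^ 2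

/-- Multiplication by `ε = (b+√D)/(b-√D)` in the coordinates `(m,n) ↦ cn + m√D`:
`T(m,n) = (((b²+D)m + 2bcn)/(ac), ((b²+D)n + 2b(D/c)m)/(ac))`. -/
def Teps (a b c : ℤ) (v : ℚ × ℚ) : ℚ × ℚ :=
  ((((b : ℚ) ^ 2 + ((b : ℚ) ^ 2 - (a : ℚ) * (c : ℚ))) * v.1 + 2 * (b : ℚ) * (c : ℚ) * v.2) /
      ((a : ℚ) * (c : ℚ)),
    (((b : ℚ) ^ 2 + ((b : ℚ) ^ 2 - (a : ℚ) * (c : ℚ))) * v.2 +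
        2 * (b : ℚ) * (((b : ℚ) ^ 2 - (a : ℚ) * (c : ℚ)) / (c : ℚ)) * v.1) /
      ((a : ℚ) * (c : ℚ)))

/-- Multiplication by `ε⁻¹ = (b-√D)/(b+√D)`, the inverse of `Teps`. -/
def Seps (a b c : ℤ) (v : ℚ × ℚ) : ℚ × ℚ :=
  ((((b : ℚ) ^ 2 + ((b : ℚ) ^ 2 - (a : ℚ) * (c : ℚ))) * v.1 - 2 * (b : ℚ) * (c : ℚ) * v.2) /
      ((a : ℚ) * (c : ℚ)),
    (((b : ℚ) ^ 2 + ((b : ℚ) ^ 2 - (a : ℚ) * (c : ℚ))) * v.2 -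
        2 * (b : ℚ) * (((b : ℚ) ^ 2 - (a : ℚ) * (c : ℚ)) / (c : ℚ)) * v.1) /
      ((a : ℚ) * (c : ℚ)))

/-- `ε = (b+√D)/(b-√D)` is a totally positive unit of norm 1 and
multiplication by `ε` preserves the coset `Λ+𝐜` and the quadratic form `Q`. -/
theorem stmt10 (a b c p r s : ℤ) (ha : 0 < a) (hb : 0 < b) (hc : 0 < c) (hp : 0 < p)
    (hab : a ∣ b) (hcb : c ∣ b) (hpa : p ∣ (b / a + 1)) (hpc : p ∣ (b / c + 1))
    (hD : 0 < b ^ 2 - a * c) (hs : (2 : ℤ) ∣ (s - (b / a + 1))) :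
    (0 < ((b : ℝ) + Real.sqrt ((b : ℝ) ^ 2 - (a : ℝ) * (c : ℝ))) /
        ((b : ℝ) - Real.sqrt ((b : ℝ) ^ 2 - (a : ℝ) * (c : ℝ)))) ∧
    (0 < ((b : ℝ) - Real.sqrt ((b : ℝ) ^ 2 - (a : ℝ) * (c : ℝ))) /
        ((b : ℝ) + Real.sqrt ((b : ℝ) ^ 2 - (a : ℝ) * (c : ℝ)))) ∧
    (((b : ℝ) + Real.sqrt ((b : ℝ) ^ 2 - (a : ℝ) * (c : ℝ))) /
        ((b : ℝ) - Real.sqrt ((b : ℝ) ^ 2 - (a : ℝ) * (c : ℝ))) *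
      (((b : ℝ) - Real.sqrt ((b : ℝ) ^ 2 - (a : ℝ) * (c : ℝ))) /
        ((b : ℝ) + Real.sqrt ((b : ℝ) ^ 2 - (a : ℝ) * (c : ℝ)))) = 1) ∧
    (∀ v : ℚ × ℚ,
      (c : ℝ) * ((Teps a b c v).2 : ℝ) +
          ((Teps a b c v).1 : ℝ) * Real.sqrt ((b : ℝ) ^ 2 - (a : ℝ) * (c : ℝ)) =
        (((b : ℝ) + Real.sqrt ((b : ℝ) ^ 2 - (a : ℝ) * (c : ℝ))) /
            ((b : ℝ) - Real.sqrt ((b : ℝ) ^ 2 - (a : ℝ) * (c : ℝ)))) *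
          ((c : ℝ) * (v.2 : ℝ) + (v.1 : ℝ) * Real.sqrt ((b : ℝ) ^ 2 - (a : ℝ) * (c : ℝ)))) ∧
    Set.BijOn (Teps a b c)
      (cosetL b c ((r : ℚ) / (p : ℚ) +
        ((a : ℚ) * (c : ℚ) * (s : ℚ)) / (2 * ((b : ℚ) ^ 2 - (a : ℚ) * (c : ℚ)))))
      (cosetL b c ((r : ℚ) / (p : ℚ) +
        ((a : ℚ) * (c : ℚ) * (s : ℚ)) / (2 * ((b : ℚ) ^ 2 - (a : ℚ) * (c : ℚ))))) ∧
    (∀ v : ℚ × ℚ, Qform a b c (Teps a b c v) = Qform a b c v) := by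
  -- integer witnesses
  obtain ⟨j, hj⟩ := hab
  obtain ⟨k, hk⟩ := hcb
  have hja : b / a = j := by rw [hj]; exact Int.mul_ediv_cancel_left j ha.ne'
  have hkc : b / c = k := by rw [hk]; exact Int.mul_ediv_cancel_left k hc.ne'
  rw [hja] at hpa hs
  rw [hkc] at hpc
  have hjk : p ∣ (j * k - 1) := by
    have h1 : j * k - 1 = (j + 1) * k - (k + 1) := by ring
    rw [h1]; exact dvd_sub (hpa.mul_right k) hpc
  obtain ⟨t, ht⟩ := hjk
  -- rational nonvanishing
  have haQ : (a : ℚ) ≠ 0 := by exact_mod_cast ha.ne'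
  have hcQ : (c : ℚ) ≠ 0 := by exact_mod_cast hc.ne'
  have hpQ : (p : ℚ) ≠ 0 := by exact_mod_cast hp.ne'
  have hDQ : (b : ℚ) ^ 2 - (a : ℚ) * c ≠ 0 := by
    have : (0 : ℚ) < (b : ℚ) ^ 2 - (a : ℚ) * c := by exact_mod_cast hD
    linarith
  have hbjQ : (b : ℚ) = a * j := by exact_mod_cast hj
  have hbkQ : (b : ℚ) = c * k := by exact_mod_cast hk
  have hb2 : (b : ℚ) ^ 2 = a * c * (j * k) := by
    linear_combination (b : ℚ) * hbkQ + (c : ℚ) * k * hbjQ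
  have htQ : (j : ℚ) * k - 1 = p * t := by exact_mod_cast ht
  set c₁ : ℚ := (r : ℚ) / (p : ℚ) +
      ((a : ℚ) * (c : ℚ) * (s : ℚ)) / (2 * ((b : ℚ) ^ 2 - (a : ℚ) * (c : ℚ))) with hc₁def
  have hDf : (b : ℚ) ^ 2 - a * c = a * c * ((j : ℚ) * k - 1) := by
    linear_combination hb2
  have hjk1 : ((j : ℚ) * k - 1) ≠ 0 := by
    intro h
    apply hDQ
    rw [hDf, h, mul_zero]
  have hc₁ : 2 * ((j : ℚ) * k - 1) * c₁ = 2 * t * r + s := by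
    rw [hc₁def, hDf]
    field_simp
    linear_combination (2 * (r:ℚ)) * htQ
  -- explicit linear form of Teps and Seps
  have hTv : ∀ x y : ℚ, Teps a b c (x, y) =
      ((2 * (j : ℚ) * k - 1) * x + 2 * j * y,
        2 * (k : ℚ) * (j * k - 1) * x + (2 * j * k - 1) * y) := by
    intro x y
    unfold Teps
    refine Prod.ext ?_ ?_
    · show (((b : ℚ)^2 + ((b:ℚ)^2 - a*c)) * x + 2*b*c*y) / (a*c) = _
      field_simp
      linear_combination 2 * x * hb2 + 2 * y * (c : ℚ) * hbjQ
    · show (((b : ℚ)^2 + ((b:ℚ)^2 - a*c)) * y + 2*b*(((b:ℚ)^2 - a*c)/c)*x) / (a*c) = _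
      field_simp
      linear_combination (2 * y * (c:ℚ) + 2 * x * b) * hb2 +
        (2 * x * (a:ℚ) * c * (j * k) - 2 * x * a * c) * hbkQ
  have hSv : ∀ x y : ℚ, Seps a b c (x, y) =
      ((2 * (j : ℚ) * k - 1) * x - 2 * j * y,
        -(2 * (k : ℚ) * (j * k - 1) * x) + (2 * j * k - 1) * y) := by
    intro x y
    unfold Seps
    refine Prod.ext ?_ ?_
    · show (((b : ℚ)^2 + ((b:ℚ)^2 - a*c)) * x - 2*b*c*y) / (a*c) = _
      field_simp
      linear_combination 2 * x * hb2 - 2 * y * (c : ℚ) * hbjQ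
    · show (((b : ℚ)^2 + ((b:ℚ)^2 - a*c)) * y - 2*b*(((b:ℚ)^2 - a*c)/c)*x) / (a*c) = _
      field_simp
      linear_combination (2 * y * (c:ℚ) - 2 * x * b) * hb2 +
        (2 * x * (a:ℚ) * c - 2 * x * (a:ℚ) * c * (j * k)) * hbkQ
  -- real square root facts
  set x : ℝ := Real.sqrt ((b : ℝ) ^ 2 - (a : ℝ) * (c : ℝ)) with hxdef
  have hDR : (0 : ℝ) < (b : ℝ) ^ 2 - (a : ℝ) * c := by exact_mod_cast hD
  have hx2 : x ^ 2 = (b : ℝ) ^ 2 - (a : ℝ) * c := Real.sq_sqrt hDR.le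
  have hbR : (0 : ℝ) < (b : ℝ) := by exact_mod_cast hb
  have hxlt : x < (b : ℝ) := by
    rw [hxdef]
    rw [Real.sqrt_lt' hbR]
    have : (0 : ℝ) < (a : ℝ) * c := by
      have := mul_pos ha hc; exact_mod_cast this
    linarith
  have hx0 : 0 ≤ x := Real.sqrt_nonneg _
  have hbmx : (0 : ℝ) < (b : ℝ) - x := by linarith
  have hbpx : (0 : ℝ) < (b : ℝ) + x := by linarith
  refine ⟨div_pos hbpx hbmx, div_pos hbmx hbpx, ?_, ?_, ?_, ?_⟩
  · field_simp
  · -- the multiplication-by-ε identity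
    intro v
    have haR : (a : ℝ) ≠ 0 := by exact_mod_cast ha.ne'
    have hcR : (c : ℝ) ≠ 0 := by exact_mod_cast hc.ne'
    have h1 : ((Teps a b c v).1 : ℝ) =
        (((b:ℝ)^2 + ((b:ℝ)^2 - a*c)) * (v.1:ℝ) + 2*b*c*(v.2:ℝ)) / (a*c) := by
      rw [Teps]; push_cast; ring
    have h2 : ((Teps a b c v).2 : ℝ) =
        (((b:ℝ)^2 + ((b:ℝ)^2 - a*c)) * (v.2:ℝ) + 2*b*(((b:ℝ)^2 - a*c)/c)*(v.1:ℝ)) / (a*c) := by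
      rw [Teps]; push_cast; ring
    rw [h1, h2]
    field_simp [hbmx.ne']
    linear_combination (-(2*(b:ℝ)*((b:ℝ)*(v.1:ℝ) + (c:ℝ)*(v.2:ℝ)))) * hx2
  · -- the bijection
    have hTS : ∀ v : ℚ × ℚ, Teps a b c (Seps a b c v) = v := by
      rintro ⟨x, y⟩
      rw [hSv x y, hTv]
      refine Prod.ext ?_ ?_ <;> simp <;> ring
    have hST : ∀ v : ℚ × ℚ, Seps a b c (Teps a b c v) = v := by
      rintro ⟨x, y⟩
      rw [hTv x y, hSv]
      refine Prod.ext ?_ ?_ <;> simp <;> ring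
    have hmapsT : Set.MapsTo (Teps a b c) (cosetL b c c₁) (cosetL b c c₁) := by
      rintro v ⟨m, n, hpar, rfl⟩
      rw [hkc] at hpar
      simp only [cosetL, Set.mem_setOf_eq]
      refine ⟨(2*j*k-1)*m + 2*j*n + (2*t*r + s + j),
        2*k*(j*k-1)*m + (2*j*k-1)*n + ((j*k-1) + 2*k*t*r + k*s), ?_, ?_⟩
      · rw [hkc]
        have hX : (2*k*(j*k-1)*m + (2*j*k-1)*n + ((j*k-1) + 2*k*t*r + k*s))
            - (k + 1) * ((2*j*k-1)*m + 2*j*n + (2*t*r + s + j))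
            = -(n - (k+1)*m) - (s - (j+1))
              + 2 * (-(m*k*(1+j)) - j*n - 1 - t*r - j) := by ring
        rw [hX]
        exact dvd_add (dvd_sub (dvd_neg.mpr hpar) hs) (dvd_mul_right 2 _)
      · rw [hTv]
        refine Prod.ext ?_ ?_
        · show (2*(j:ℚ)*k-1) * ((m:ℚ) + c₁) + 2*j*((n:ℚ) + 1/2) = _
          push_cast
          linear_combination hc₁
        · show 2*(k:ℚ)*(j*k-1) * ((m:ℚ) + c₁) + (2*(j:ℚ)*k-1)*((n:ℚ) + 1/2) = _
          push_cast
          linear_combination (k : ℚ) * hc₁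
    have hmapsS : Set.MapsTo (Seps a b c) (cosetL b c c₁) (cosetL b c c₁) := by
      rintro v ⟨m, n, hpar, rfl⟩
      rw [hkc] at hpar
      simp only [cosetL, Set.mem_setOf_eq]
      refine ⟨(2*j*k-1)*m - 2*j*n + (2*t*r + s - j),
        -(2*k*(j*k-1)*m) + (2*j*k-1)*n + ((j*k-1) - 2*k*t*r - k*s), ?_, ?_⟩
      · rw [hkc]
        have hX : (-(2*k*(j*k-1)*m) + (2*j*k-1)*n + ((j*k-1) - 2*k*t*r - k*s))
            - (k + 1) * ((2*j*k-1)*m - 2*j*n + (2*t*r + s - j))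
            = -(n - (k+1)*m) - (s - (j+1))
              + 2 * (m*(-(2*j*k*k) - j*k + k) + n*(2*j*k + j)
                + (j*k - 1) - 2*k*t*r - t*r - k*s) := by ring
        rw [hX]
        exact dvd_add (dvd_sub (dvd_neg.mpr hpar) hs) (dvd_mul_right 2 _)
      · rw [hSv]
        refine Prod.ext ?_ ?_
        · show (2*(j:ℚ)*k-1) * ((m:ℚ) + c₁) - 2*j*((n:ℚ) + 1/2) = _
          push_cast
          linear_combination hc₁
        · show -(2*(k:ℚ)*(j*k-1) * ((m:ℚ) + c₁)) + (2*(j:ℚ)*k-1)*((n:ℚ) + 1/2) = _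
          push_cast
          linear_combination (-(k : ℚ)) * hc₁
    exact Set.InvOn.bijOn ⟨fun v _ => hST v, fun v _ => hTS v⟩ hmapsT hmapsS
  · -- Qform invariance
    intro v
    unfold Qform Teps
    simp only
    field_simp
    ring
end

section
/- Let a,b,c,p be positive integers with a|b, c|b, p|(b/a+1), p|(b/c+1), D=b²−ac>0, let s₁,s₂ be odd integers and r ∈ ℤ, and set h = gcd(b/a+1, b/c+1) (so p | h). For odd integers t₁,t₂ define f_{t₁,t₂}(τ) = q^{p²ac(2bt₁t₂−at₁²−ct₂²)/(8D)} · Σ^{indef}_{(m,n)∈ℤ², m ≡ n (mod p)} (−1)^{(n−m)/p} · ζ_p^{rm} · exp( πiτ(2bmn + a(m²+mpt₁) + c(n²+npt₂)) ), where ζ_p = exp(2πi/p). Assume at least one of the following: (i) (s₁+s₂)/2 ∉ (h/p)ℤ; (ii) there are no integers k,l with r = (h+p)(2b+a+c)/(2hb) + (p/b)(ak+cl). Then there exist integers l₁, l₂ such that the function f_{s₁+2(h/p)l₁, s₂+2(h/p)l₂} is not identically zero on ℍ, i.e. there exists τ₀ ∈ ℍ with f_{s₁+2(h/p)l₁, s₂+2(h/p)l₂}(τ₀)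 ≠ 0. -/
/-- Summand `(-1)^{(n-m)/p} ζ_p^{rm} exp(πiτ(2bmn + a(m²+mpt₁) + c(n²+npt₂)))`,
where `ζ_p = exp(2πi/p)`. -/
noncomputable def zterm (a b c p r t₁ t₂ : ℤ) (τ : ℂ) (m n : ℤ) : ℂ :=
  (-1 : ℂ) ^ ((n - m) / p) *
    Complex.exp (2 * (Real.pi : ℂ) * Complex.I / (p : ℂ)) ^ (r * m) *
    Complex.exp ((Real.pi : ℂ) * Complex.I * τ *
      (2 * (b : ℂ) * (m : ℂ) * (n : ℂ) +
        (a : ℂ) * ((m : ℂ) ^ 2 + (m : ℂ) * (p : ℂ) * (t₁ : ℂ)) +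
        (c : ℂ) * ((n : ℂ) ^ 2 + (n : ℂ) * (p : ℂ) * (t₂ : ℂ))))

open Complex Real
set_option maxHeartbeats 1000000



noncomputable def QZ (a b c p t₁ t₂ m n : ℤ) : ℤ :=
  2*b*m*n + a*(m^2 + m*p*t₁) + c*(n^2 + n*p*t₂)

lemma zeta_norm (p n : ℤ) : ‖Complex.exp (2 * (Real.pi : ℂ) * Complex.I / (p : ℂ)) ^ n‖ = 1 := by
  rw [norm_zpow]
  have h1 : 2 * (Real.pi : ℂ) * Complex.I / (p : ℂ) = ((2 * Real.pi / (p : ℝ) : ℝ) : ℂ) * Complex.I := by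
    push_cast
    ring
  rw [h1, Complex.norm_exp_ofReal_mul_I, one_zpow]

lemma inner_cast (a b c p t₁ t₂ m n : ℤ) :
    (2 * (b : ℂ) * (m : ℂ) * (n : ℂ) +
        (a : ℂ) * ((m : ℂ) ^ 2 + (m : ℂ) * (p : ℂ) * (t₁ : ℂ)) +
        (c : ℂ) * ((n : ℂ) ^ 2 + (n : ℂ) * (p : ℂ) * (t₂ : ℂ))) = ((QZ a b c p t₁ t₂ m n : ℤ) : ℂ) := by
  unfold QZ; push_cast; ring

lemma exp_term_eq (y : ℝ) (Q : ℤ) :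
    Complex.exp ((Real.pi : ℂ) * Complex.I * ((y:ℝ) * Complex.I) * ((Q : ℤ) : ℂ))
      = ((Real.exp (-(Real.pi * y * (Q:ℝ))) : ℝ) : ℂ) := by
  have h : (Real.pi : ℂ) * Complex.I * ((y:ℝ) * Complex.I) * ((Q : ℤ) : ℂ)
      = ((-(Real.pi * y * (Q:ℝ)) : ℝ) : ℂ) := by
    have h2 : (Real.pi : ℂ) * Complex.I * ((y:ℝ) * Complex.I) * ((Q : ℤ) : ℂ)
        = (Real.pi : ℂ) * (y:ℝ) * ((Q : ℤ) : ℂ) * (Complex.I * Complex.I) := by ring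
    rw [h2, Complex.I_mul_I]
    push_cast
    ring
  rw [h, ← Complex.ofReal_exp]

lemma zterm_norm (a b c p r t₁ t₂ m n : ℤ) (y : ℝ) :
    ‖zterm a b c p r t₁ t₂ ((y:ℝ) * Complex.I) m n‖
      = Real.exp (-(Real.pi * y * ((QZ a b c p t₁ t₂ m n : ℤ) : ℝ))) := by
  unfold zterm
  rw [inner_cast, exp_term_eq, norm_mul, norm_mul, zeta_norm]
  rw [norm_zpow, norm_neg, norm_one, one_zpow, one_mul, one_mul, Complex.norm_real,
    Real.norm_eq_abs, _root_.abs_of_nonneg (Real.exp_nonneg _)]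

-- value at (0,0)
lemma zterm_zero (a b c p r t₁ t₂ : ℤ) (τ : ℂ) : zterm a b c p r t₁ t₂ τ 0 0 = 1 := by
  unfold zterm
  norm_num

-- value at (-1,-1)
lemma zterm_neg_one (a b c p r t₁ t₂ : ℤ) (y : ℝ) :
    zterm a b c p r t₁ t₂ ((y:ℝ) * Complex.I) (-1) (-1)
      = Complex.exp (2 * (Real.pi : ℂ) * Complex.I / (p : ℂ)) ^ (r * (-1)) *
        ((Real.exp (-(Real.pi * y * ((QZ a b c p t₁ t₂ (-1) (-1) : ℤ) : ℝ))) : ℝ) : ℂ) := by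
  unfold zterm
  rw [inner_cast, exp_term_eq]
  norm_num




lemma int_self_le_sq (x : ℤ) (hx : 0 ≤ x) : x ≤ x^2 := by
  rcases (by omega : x = 0 ∨ 1 ≤ x) with h | h
  · simp [h]
  · nlinarith

-- lower bound on positive quadrant: QZ ≥ m + n
lemma qz_lb_pos (a b c p t₁ t₂ m n : ℤ) (ha : 1 ≤ a) (hb : 1 ≤ b) (hc : 1 ≤ c)
    (hp : 1 ≤ p) (ht₁ : 1 ≤ t₁) (ht₂ : 1 ≤ t₂) (hm : 0 ≤ m) (hn : 0 ≤ n) :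
    m + n ≤ QZ a b c p t₁ t₂ m n := by
  unfold QZ
  have hap : (1:ℤ)*1 ≤ a*p := mul_le_mul ha hp (by norm_num) (by omega)
  have hapt : (1:ℤ)*1 ≤ (a*p)*t₁ := mul_le_mul (by linarith) ht₁ (by norm_num) (by nlinarith)
  have hcp : (1:ℤ)*1 ≤ c*p := mul_le_mul hc hp (by norm_num) (by omega)
  have hcpt : (1:ℤ)*1 ≤ (c*p)*t₂ := mul_le_mul (by linarith) ht₂ (by norm_num) (by nlinarith)
  have h1 : m ≤ a*(m*p*t₁) := by nlinarith [mul_nonneg hm (show (0:ℤ) ≤ a*p*t₁ - 1 by nlinarith)]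
  have h2 : n ≤ c*(n*p*t₂) := by nlinarith [mul_nonneg hn (show (0:ℤ) ≤ c*p*t₂ - 1 by nlinarith)]
  nlinarith [mul_nonneg hm hn, sq_nonneg m, sq_nonneg n]

-- lower bound on negative quadrant: QZ ≥ (-m) + (-n) - K
lemma qz_lb_neg (a b c p t₁ t₂ m n : ℤ) (ha : 1 ≤ a) (hb : 1 ≤ b) (hc : 1 ≤ c)
    (hp : 1 ≤ p) (ht₁ : 1 ≤ t₁) (ht₂ : 1 ≤ t₂) (hm : m < 0) (hn : n < 0) :
    (-m) + (-n) - ((a*p*t₁+1)^2 + (c*p*t₂+1)^2) ≤ QZ a b c p t₁ t₂ m n := by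
  unfold QZ
  have hj : 1 ≤ -m := by omega
  have hk : 1 ≤ -n := by omega
  have h1 : (-m) - (a*p*t₁+1)^2 ≤ a*(m^2 + m*p*t₁) := by
    nlinarith [sq_nonneg (2*(-m) - (a*p*t₁+1)), sq_nonneg (a*p*t₁+1), mul_nonneg (by nlinarith : (0:ℤ) ≤ a - 1) (sq_nonneg m)]
  have h2 : (-n) - (c*p*t₂+1)^2 ≤ c*(n^2 + n*p*t₂) := by
    nlinarith [sq_nonneg (2*(-n) - (c*p*t₂+1)), sq_nonneg (c*p*t₂+1), mul_nonneg (by nlinarith : (0:ℤ) ≤ c - 1) (sq_nonneg n)]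
  nlinarith [mul_pos (by omega : (0:ℤ) < -m) (by omega : (0:ℤ) < -n)]

-- Q3 minimum: for (j,k) ≥ 1, (j,k) ≠ (1,1):  QZ(-1,-1) + 1 ≤ QZ(-j,-k)
lemma q3_min (a b c p t₁ t₂ j k : ℤ) (ha : 1 ≤ a) (hb : 1 ≤ b) (hc : 1 ≤ c)
    (h₁ : p*a*t₁ ≤ 2*(a+b)) (h₂ : p*c*t₂ ≤ 2*(b+c))
    (hj : 1 ≤ j) (hk : 1 ≤ k) (hne : ¬(j = 1 ∧ k = 1)) :
    QZ a b c p t₁ t₂ (-1) (-1) + 1 ≤ QZ a b c p t₁ t₂ (-j) (-k) := by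
  unfold QZ
  have hu : 0 ≤ j - 1 := by omega
  have hv : 0 ≤ k - 1 := by omega
  have hsum : 1 ≤ (j-1) + (k-1) := by omega
  have e1 : (j-1) ≤ (j-1)^2 := int_self_le_sq _ hu
  have e2 : (k-1) ≤ (k-1)^2 := int_self_le_sq _ hv
  have P1 : 0 ≤ (j-1)*(2*(a+b) - p*a*t₁) := mul_nonneg hu (by omega)
  have P2 : 0 ≤ (k-1)*(2*(b+c) - p*c*t₂) := mul_nonneg hv (by omega)
  have P3 : 0 ≤ (j-1)*(k-1) := mul_nonneg hu hv
  have P4 : 0 ≤ (a-1)*(j-1)^2 := mul_nonneg (by omega) (sq_nonneg _)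
  have P5 : 0 ≤ (c-1)*(k-1)^2 := mul_nonneg (by omega) (sq_nonneg _)
  have P6 : 0 ≤ (j-1)*(a*(j+1) + 2*b - p*a*t₁ - a*(j-1)) := mul_nonneg hu (by nlinarith)
  have P7 : 0 ≤ (k-1)*(c*(k+1) + 2*b - p*c*t₂ - c*(k-1)) := mul_nonneg hv (by nlinarith)
  nlinarith [P6, P7, P3, P4, P5, e1, e2, mul_nonneg (by omega : (0:ℤ) ≤ 2*b) P3]
-- summability of the majorant over ℤ
lemma summable_exp_natAbs (y : ℝ) (hy : 0 < y) :
    Summable (fun m : ℤ => Real.exp (-(Real.pi * y)) ^ m.natAbs) := by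
  have h0 : (0:ℝ) ≤ Real.exp (-(Real.pi * y)) := Real.exp_nonneg _
  have h1 : Real.exp (-(Real.pi * y)) < 1 := by
    rw [Real.exp_lt_one_iff]
    have := Real.pi_pos
    nlinarith
  have hs : Summable (fun n : ℕ => Real.exp (-(Real.pi * y)) ^ n) :=
    summable_geometric_of_lt_one h0 h1
  apply Summable.of_nat_of_neg
  · simp only [Int.natAbs_natCast]
    exact hs
  · simp only [Int.natAbs_neg, Int.natAbs_natCast]
    exact hs

lemma summ_subtype {g : ℤ × ℤ → ℝ} (hg : Summable g) (s : Set (ℤ × ℤ)) :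
    Summable (fun q : s => g q.1) := hg.subtype s

lemma summable_majorant'' (f : ℤ → ℝ) (hf : Summable f) (h0 : ∀ m, 0 ≤ f m) :
    Summable (fun x : ℤ × ℤ => f x.1 * f x.2) :=
  Summable.mul_of_nonneg hf hf h0 h0

lemma summable_majorant (y : ℝ) (hy : 0 < y) :
    Summable (fun x : ℤ × ℤ =>
      Real.exp (-(Real.pi * y)) ^ x.1.natAbs * Real.exp (-(Real.pi * y)) ^ x.2.natAbs) :=
  summable_majorant'' _ (summable_exp_natAbs y hy) (fun m => by positivity)

lemma exp_natAbs_eq (y : ℝ) (m : ℤ) :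
    Real.exp (-(Real.pi * y)) ^ m.natAbs = Real.exp (-(Real.pi * y * |(m : ℝ)|)) := by
  rw [← Real.exp_nat_mul]
  have : ((m.natAbs : ℕ) : ℝ) = |(m : ℝ)| := by
    rw [Nat.cast_natAbs, Int.cast_abs]
  rw [show ((m.natAbs : ℕ) : ℝ) * -(Real.pi * y) = -(Real.pi * y * ((m.natAbs : ℕ) : ℝ)) by ring, this]

-- summability of norms over a set contained in pos ∪ neg quadrants
lemma summable_zterm_norm (a b c p r t₁ t₂ : ℤ) (ha : 1 ≤ a) (hb : 1 ≤ b) (hc : 1 ≤ c)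
    (hp : 1 ≤ p) (ht₁ : 1 ≤ t₁) (ht₂ : 1 ≤ t₂) (y : ℝ) (hy : 0 < y)
    (s : Set (ℤ × ℤ))
    (hs : ∀ x : ℤ × ℤ, x ∈ s → (0 ≤ x.1 ∧ 0 ≤ x.2) ∨ (x.1 < 0 ∧ x.2 < 0)) :
    Summable (fun q : s => ‖zterm a b c p r t₁ t₂ ((y:ℝ) * Complex.I) q.1.1 q.1.2‖) := by
  set K : ℤ := (a*p*t₁+1)^2 + (c*p*t₂+1)^2 with hK
  have hK0 : (0:ℤ) ≤ K := by positivity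
  have hmaj : Summable (fun x : ℤ × ℤ => Real.exp (Real.pi * y * (K:ℝ)) *
      (Real.exp (-(Real.pi * y)) ^ x.1.natAbs * Real.exp (-(Real.pi * y)) ^ x.2.natAbs)) :=
    (summable_majorant y hy).mul_left _
  have hsub : Summable (fun q : s => Real.exp (Real.pi * y * (K:ℝ)) *
      (Real.exp (-(Real.pi * y)) ^ q.1.1.natAbs * Real.exp (-(Real.pi * y)) ^ q.1.2.natAbs)) :=
    summ_subtype hmaj s
  apply Summable.of_nonneg_of_le (fun q => norm_nonneg _) _ hsub
  intro q
  rw [zterm_norm]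
  have hQ : |(q.1.1 : ℤ)| + |(q.1.2 : ℤ)| - K ≤ QZ a b c p t₁ t₂ q.1.1 q.1.2 := by
    rcases hs q.1 q.2 with ⟨h1, h2⟩ | ⟨h1, h2⟩
    · have := qz_lb_pos a b c p t₁ t₂ q.1.1 q.1.2 ha hb hc hp ht₁ ht₂ h1 h2
      rw [abs_of_nonneg h1, abs_of_nonneg h2]
      omega
    · have := qz_lb_neg a b c p t₁ t₂ q.1.1 q.1.2 ha hb hc hp ht₁ ht₂ h1 h2
      rw [abs_of_neg h1, abs_of_neg h2]
      omega
  rw [exp_natAbs_eq, exp_natAbs_eq, ← Real.exp_add, ← Real.exp_add]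
  apply Real.exp_le_exp.2
  have hQR : |(q.1.1 : ℝ)| + |(q.1.2 : ℝ)| - (K:ℝ) ≤ ((QZ a b c p t₁ t₂ q.1.1 q.1.2 : ℤ) : ℝ) := by
    exact_mod_cast hQ
  have hπ : (0:ℝ) < Real.pi * y := by positivity
  nlinarith [mul_le_mul_of_nonneg_left hQR (le_of_lt hπ)]


/-- The series `f_{t₁,t₂}` of Theorem `nonvan`:
`q^{p²ac(2bt₁t₂-at₁²-ct₂²)/(8D)} Σ^{indef}_{m≡n (p)} (-1)^{(n-m)/p} ζ_p^{rm}
  q^{bmn + a(m²+mpt₁)/2 + c(n²+npt₂)/2}`. -/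
noncomputable def fnv (a b c p r t₁ t₂ : ℤ) (τ : ℂ) : ℂ :=
  Complex.exp (2 * (Real.pi : ℂ) * Complex.I * τ *
      ((p : ℂ) ^ 2 * (a : ℂ) * (c : ℂ) *
          (2 * (b : ℂ) * (t₁ : ℂ) * (t₂ : ℂ) - (a : ℂ) * (t₁ : ℂ) ^ 2 - (c : ℂ) * (t₂ : ℂ) ^ 2) /
        (8 * ((b : ℂ) ^ 2 - (a : ℂ) * (c : ℂ))))) *
    ((∑' q : {q : ℤ × ℤ // 0 ≤ q.1 ∧ 0 ≤ q.2 ∧ p ∣ (q.1 - q.2)},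
        zterm a b c p r t₁ t₂ τ q.1.1 q.1.2) -
      ∑' q : {q : ℤ × ℤ // q.1 < 0 ∧ q.2 < 0 ∧ p ∣ (q.1 - q.2)},
        zterm a b c p r t₁ t₂ τ q.1.1 q.1.2)

lemma exp_y_bound (y : ℝ) (hy : 1 ≤ y) (N Q : ℤ) (hQ : N + 1 ≤ Q) :
    Real.exp (-(Real.pi * y * (Q:ℝ)))
      ≤ Real.exp (-(Real.pi * y * ((N:ℝ)+1))) * (Real.exp (Real.pi * ((N:ℝ)+1)) * Real.exp (-(Real.pi * 1 * (Q:ℝ)))) := by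
  rw [← Real.exp_add, ← Real.exp_add]
  apply Real.exp_le_exp.2
  have hQ' : (N:ℝ) + 1 ≤ (Q:ℝ) := by exact_mod_cast hQ
  nlinarith [Real.pi_pos, mul_nonneg (by linarith : (0:ℝ) ≤ y - 1) (by linarith : (0:ℝ) ≤ (Q:ℝ) - ((N:ℝ)+1))]

lemma zr_ne_one (p r : ℤ) (hp : 1 ≤ p) (hr : ¬ (p ∣ r)) :
    Complex.exp (2 * (Real.pi : ℂ) * Complex.I / (p : ℂ)) ^ (r * (-1)) ≠ 1 := by
  intro hone
  apply hr
  rw [show r * (-1) = -r by ring] at hone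
  rw [← Complex.exp_int_mul] at hone
  obtain ⟨n, hn⟩ := Complex.exp_eq_one_iff.1 hone
  have hp0 : (p : ℂ) ≠ 0 := Int.cast_ne_zero.2 (by omega)
  have h2πI : (2 : ℂ) * (Real.pi : ℂ) * Complex.I ≠ 0 := by
    apply mul_ne_zero (mul_ne_zero two_ne_zero _) Complex.I_ne_zero
    exact Complex.ofReal_ne_zero.2 Real.pi_ne_zero
  have key : ((-r : ℤ) : ℂ) = (n : ℂ) * (p : ℂ) := by
    field_simp at hn
    have hn' : ((-r : ℤ) : ℂ) * (2 * (Real.pi : ℂ) * Complex.I) = ((n : ℂ) * (p:ℂ)) * (2 * (Real.pi : ℂ) * Complex.I) := by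
      push_cast at hn ⊢
      ring_nf at hn ⊢
      linear_combination (2 * (Real.pi : ℂ) * Complex.I) * hn
    exact mul_right_cancel₀ h2πI hn'
  have hnr : -r = n * p := by exact_mod_cast key
  exact ⟨-n, by linear_combination -hnr⟩

lemma master (a b c p r t₁ t₂ : ℤ) (ha : 1 ≤ a) (hb : 1 ≤ b) (hc : 1 ≤ c)
    (hp : 1 ≤ p) (ht₁ : 1 ≤ t₁) (ht₂ : 1 ≤ t₂)
    (hQ3 : ∀ j k : ℤ, 1 ≤ j → 1 ≤ k → ¬(j = 1 ∧ k = 1) →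
      min 0 (QZ a b c p t₁ t₂ (-1) (-1)) + 1 ≤ QZ a b c p t₁ t₂ (-j) (-k))
    (hcase : 0 < QZ a b c p t₁ t₂ (-1) (-1) ∨ QZ a b c p t₁ t₂ (-1) (-1) < 0 ∨
      (QZ a b c p t₁ t₂ (-1) (-1) = 0 ∧ ¬ (p ∣ r))) :
    ∃ τ₀ : ℂ, 0 < τ₀.im ∧ fnv a b c p r t₁ t₂ τ₀ ≠ 0 := by
  classical
  set E : ℤ := QZ a b c p t₁ t₂ (-1) (-1) with hE
  set μ : ℤ := min 0 E with hμdef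
  have hμ0 : μ ≤ 0 := min_le_left _ _
  have hμE : μ ≤ E := min_le_right _ _
  set ζ : ℂ := Complex.exp (2 * (Real.pi : ℂ) * Complex.I / (p : ℂ)) with hζ
  set zr : ℂ := ζ ^ (r * (-1 : ℤ)) with hzr
  have hzrnorm : ‖zr‖ = 1 := zeta_norm p _
  -- the δ lemma
  have hδ : ∃ δ : ℝ, 0 < δ ∧ ∀ y : ℝ, 1 ≤ y →
      δ * Real.exp (-(Real.pi * y * (μ:ℝ))) ≤ ‖1 - zr * ((Real.exp (-(Real.pi * y * (E:ℝ))) : ℝ) : ℂ)‖ := by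
    rcases hcase with hE1 | hE1 | ⟨hE1, hr⟩
    · refine ⟨1 - Real.exp (-Real.pi), by
        have := Real.exp_lt_one_iff.2 (show -Real.pi < 0 by linarith [Real.pi_pos])
        linarith, ?_⟩
      intro y hy
      have hμz : μ = 0 := min_eq_left (by omega)
      have hEr : (1:ℝ) ≤ (E:ℝ) := by exact_mod_cast hE1
      have hπy : (0:ℝ) < Real.pi * y := mul_pos Real.pi_pos (by linarith)
      have he1 : Real.exp (-(Real.pi * y * (E:ℝ))) ≤ Real.exp (-Real.pi) := by
        apply Real.exp_le_exp.2
        have s1 : Real.pi ≤ Real.pi * y := le_mul_of_one_le_right Real.pi_pos.le hy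
        have s2 : Real.pi * y ≤ Real.pi * y * (E:ℝ) := le_mul_of_one_le_right hπy.le hEr
        linarith
      have hnz : ‖zr * ((Real.exp (-(Real.pi * y * (E:ℝ))) : ℝ) : ℂ)‖ = Real.exp (-(Real.pi * y * (E:ℝ))) := by
        rw [norm_mul, hzrnorm, one_mul, Complex.norm_real, Real.norm_eq_abs,
          _root_.abs_of_nonneg (Real.exp_nonneg _)]
      calc (1 - Real.exp (-Real.pi)) * Real.exp (-(Real.pi * y * (μ:ℝ)))
          = 1 - Real.exp (-Real.pi) := by rw [hμz]; norm_num
        _ ≤ 1 - Real.exp (-(Real.pi * y * (E:ℝ))) := by linarith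
        _ ≤ ‖(1:ℂ)‖ - ‖zr * ((Real.exp (-(Real.pi * y * (E:ℝ))) : ℝ) : ℂ)‖ := by
            rw [hnz, norm_one]
        _ ≤ ‖1 - zr * ((Real.exp (-(Real.pi * y * (E:ℝ))) : ℝ) : ℂ)‖ := norm_sub_norm_le _ _
    · refine ⟨1 - Real.exp (-Real.pi), by
        have := Real.exp_lt_one_iff.2 (show -Real.pi < 0 by linarith [Real.pi_pos])
        linarith, ?_⟩
      intro y hy
      have hμz : μ = E := min_eq_right (by omega)
      have hEr : (E:ℝ) ≤ -1 := by exact_mod_cast (by omega : E ≤ -1)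
      have hπy : (0:ℝ) < Real.pi * y := mul_pos Real.pi_pos (by linarith)
      have hnz : ‖zr * ((Real.exp (-(Real.pi * y * (E:ℝ))) : ℝ) : ℂ)‖ = Real.exp (-(Real.pi * y * (E:ℝ))) := by
        rw [norm_mul, hzrnorm, one_mul, Complex.norm_real, Real.norm_eq_abs,
          _root_.abs_of_nonneg (Real.exp_nonneg _)]
      have key : 1 ≤ Real.exp (-Real.pi) * Real.exp (-(Real.pi * y * (E:ℝ))) := by
        rw [← Real.exp_add]
        apply Real.one_le_exp_iff.2
        have s1 : Real.pi * y * (E:ℝ) ≤ Real.pi * y * (-1) := mul_le_mul_of_nonneg_left hEr hπy.le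
        have s2 : Real.pi ≤ Real.pi * y := le_mul_of_one_le_right Real.pi_pos.le hy
        linarith
      calc (1 - Real.exp (-Real.pi)) * Real.exp (-(Real.pi * y * (μ:ℝ)))
          = Real.exp (-(Real.pi * y * (E:ℝ))) - Real.exp (-Real.pi) * Real.exp (-(Real.pi * y * (E:ℝ))) := by
            rw [hμz]; ring
        _ ≤ Real.exp (-(Real.pi * y * (E:ℝ))) - 1 := by linarith
        _ ≤ ‖zr * ((Real.exp (-(Real.pi * y * (E:ℝ))) : ℝ) : ℂ)‖ - ‖(1:ℂ)‖ := by
            rw [hnz, norm_one]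
        _ ≤ ‖zr * ((Real.exp (-(Real.pi * y * (E:ℝ))) : ℝ) : ℂ) - 1‖ := norm_sub_norm_le _ _
        _ = ‖1 - zr * ((Real.exp (-(Real.pi * y * (E:ℝ))) : ℝ) : ℂ)‖ := norm_sub_rev _ _
    · have hne : zr ≠ 1 := zr_ne_one p r hp hr
      refine ⟨‖1 - zr‖, norm_pos_iff.2 (sub_ne_zero.2 (Ne.symm hne)), ?_⟩
      intro y hy
      have hμz : μ = 0 := by rw [hμdef, hE1]; simp
      rw [hμz, hE1]
      norm_num
  obtain ⟨δ, hδ0, hδW⟩ := hδ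
  -- summability of norms
  have hsumP : ∀ y : ℝ, 0 < y → Summable (fun q : {q : ℤ × ℤ // 0 ≤ q.1 ∧ 0 ≤ q.2 ∧ p ∣ (q.1 - q.2)} =>
      ‖zterm a b c p r t₁ t₂ ((y:ℝ) * Complex.I) q.1.1 q.1.2‖) := by
    intro y hy
    exact summable_zterm_norm a b c p r t₁ t₂ ha hb hc hp ht₁ ht₂ y hy
      {x : ℤ × ℤ | 0 ≤ x.1 ∧ 0 ≤ x.2 ∧ p ∣ (x.1 - x.2)} (fun x hx => Or.inl ⟨hx.1, hx.2.1⟩)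
  have hsumM : ∀ y : ℝ, 0 < y → Summable (fun q : {q : ℤ × ℤ // q.1 < 0 ∧ q.2 < 0 ∧ p ∣ (q.1 - q.2)} =>
      ‖zterm a b c p r t₁ t₂ ((y:ℝ) * Complex.I) q.1.1 q.1.2‖) := by
    intro y hy
    exact summable_zterm_norm a b c p r t₁ t₂ ha hb hc hp ht₁ ht₂ y hy
      {x : ℤ × ℤ | x.1 < 0 ∧ x.2 < 0 ∧ p ∣ (x.1 - x.2)} (fun x hx => Or.inr ⟨hx.1, hx.2.1⟩)
  set V₁ : ℝ := ∑' q : {q : ℤ × ℤ // 0 ≤ q.1 ∧ 0 ≤ q.2 ∧ p ∣ (q.1 - q.2)},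
      ‖zterm a b c p r t₁ t₂ (((1:ℝ):ℂ) * Complex.I) q.1.1 q.1.2‖ with hV₁
  set V₂ : ℝ := ∑' q : {q : ℤ × ℤ // q.1 < 0 ∧ q.2 < 0 ∧ p ∣ (q.1 - q.2)},
      ‖zterm a b c p r t₁ t₂ (((1:ℝ):ℂ) * Complex.I) q.1.1 q.1.2‖ with hV₂
  have hV₁0 : 0 ≤ V₁ := tsum_nonneg (fun _ => norm_nonneg _)
  have hV₂0 : 0 ≤ V₂ := tsum_nonneg (fun _ => norm_nonneg _)
  set C : ℝ := Real.exp (Real.pi * ((μ:ℝ)+1)) * (V₁ + V₂) with hC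
  have hC0 : 0 ≤ C := mul_nonneg (Real.exp_nonneg _) (by linarith)
  set y : ℝ := max 1 (Real.log ((C+1)/δ) / Real.pi) with hy
  have hy1 : 1 ≤ y := le_max_left _ _
  have hy0 : 0 < y := by linarith
  have hCe : (C+1) * Real.exp (-(Real.pi * y)) ≤ δ := by
    have hq : (C+1)/δ ≤ Real.exp (Real.pi * y) := by
      rw [← Real.exp_log (show 0 < (C+1)/δ by positivity)]
      apply Real.exp_le_exp.2
      have hh : Real.log ((C+1)/δ) / Real.pi ≤ y := le_max_right _ _
      calc Real.log ((C+1)/δ) = (Real.log ((C+1)/δ) / Real.pi) * Real.pi := by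
            field_simp
        _ ≤ y * Real.pi := mul_le_mul_of_nonneg_right hh Real.pi_pos.le
        _ = Real.pi * y := by ring
    have hee : Real.exp (Real.pi*y) * Real.exp (-(Real.pi*y)) = 1 := by
      rw [← Real.exp_add]; simp
    have hmul := mul_le_mul_of_nonneg_right hq (Real.exp_nonneg (-(Real.pi*y)))
    rw [hee] at hmul
    calc (C+1) * Real.exp (-(Real.pi*y)) = δ * ((C+1)/δ * Real.exp (-(Real.pi*y))) := by
          field_simp
      _ ≤ δ * 1 := mul_le_mul_of_nonneg_left hmul hδ0.le
      _ = δ := mul_one δ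
  refine ⟨(y : ℂ) * Complex.I, by simp [hy0], ?_⟩
  unfold fnv
  apply mul_ne_zero (Complex.exp_ne_zero _)
  set S₁ : ℂ := ∑' q : {q : ℤ × ℤ // 0 ≤ q.1 ∧ 0 ≤ q.2 ∧ p ∣ (q.1 - q.2)},
      zterm a b c p r t₁ t₂ ((y:ℝ) * Complex.I) q.1.1 q.1.2 with hS₁
  set S₂ : ℂ := ∑' q : {q : ℤ × ℤ // q.1 < 0 ∧ q.2 < 0 ∧ p ∣ (q.1 - q.2)},
      zterm a b c p r t₁ t₂ ((y:ℝ) * Complex.I) q.1.1 q.1.2 with hS₂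
  have hs₁ : Summable (fun q : {q : ℤ × ℤ // 0 ≤ q.1 ∧ 0 ≤ q.2 ∧ p ∣ (q.1 - q.2)} =>
      zterm a b c p r t₁ t₂ ((y:ℝ) * Complex.I) q.1.1 q.1.2) := Summable.of_norm (hsumP y hy0)
  have hs₂ : Summable (fun q : {q : ℤ × ℤ // q.1 < 0 ∧ q.2 < 0 ∧ p ∣ (q.1 - q.2)} =>
      zterm a b c p r t₁ t₂ ((y:ℝ) * Complex.I) q.1.1 q.1.2) := Summable.of_norm (hsumM y hy0)
  set b₀ : {q : ℤ × ℤ // 0 ≤ q.1 ∧ 0 ≤ q.2 ∧ p ∣ (q.1 - q.2)} :=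
    ⟨((0:ℤ),(0:ℤ)), ⟨le_refl 0, le_refl 0, by simp⟩⟩ with hb₀
  set b₁ : {q : ℤ × ℤ // q.1 < 0 ∧ q.2 < 0 ∧ p ∣ (q.1 - q.2)} :=
    ⟨((-1:ℤ),(-1:ℤ)), ⟨by norm_num, by norm_num, by simp⟩⟩ with hb₁
  set A : ℂ := ∑' q : {q : ℤ × ℤ // 0 ≤ q.1 ∧ 0 ≤ q.2 ∧ p ∣ (q.1 - q.2)},
      if q = b₀ then 0 else zterm a b c p r t₁ t₂ ((y:ℝ) * Complex.I) q.1.1 q.1.2 with hA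
  set B : ℂ := ∑' q : {q : ℤ × ℤ // q.1 < 0 ∧ q.2 < 0 ∧ p ∣ (q.1 - q.2)},
      if q = b₁ then 0 else zterm a b c p r t₁ t₂ ((y:ℝ) * Complex.I) q.1.1 q.1.2 with hB
  have eq1 : S₁ = 1 + A := by
    rw [hS₁, hs₁.tsum_eq_add_tsum_ite b₀, ← hA]
    congr 1
    exact zterm_zero a b c p r t₁ t₂ _
  have eq2 : S₂ = zr * ((Real.exp (-(Real.pi * y * (E:ℝ))) : ℝ) : ℂ) + B := by
    rw [hS₂, hs₂.tsum_eq_add_tsum_ite b₁, ← hB]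
    congr 1
    exact zterm_neg_one a b c p r t₁ t₂ y
  -- remainder bounds
  have hbndA : ‖A‖ ≤ Real.exp (-(Real.pi * y * ((μ:ℝ)+1))) * (Real.exp (Real.pi*((μ:ℝ)+1)) * V₁) := by
    have hsn : Summable (fun q : {q : ℤ × ℤ // 0 ≤ q.1 ∧ 0 ≤ q.2 ∧ p ∣ (q.1 - q.2)} =>
        ‖if q = b₀ then 0 else zterm a b c p r t₁ t₂ ((y:ℝ) * Complex.I) q.1.1 q.1.2‖) := by
      apply Summable.of_nonneg_of_le (fun q => norm_nonneg _) _ (hsumP y hy0)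
      intro q
      by_cases hqb : q = b₀ <;> simp [hqb]
    calc ‖A‖ ≤ ∑' q : {q : ℤ × ℤ // 0 ≤ q.1 ∧ 0 ≤ q.2 ∧ p ∣ (q.1 - q.2)},
          ‖if q = b₀ then 0 else zterm a b c p r t₁ t₂ ((y:ℝ) * Complex.I) q.1.1 q.1.2‖ :=
        norm_tsum_le_tsum_norm hsn
      _ ≤ ∑' q : {q : ℤ × ℤ // 0 ≤ q.1 ∧ 0 ≤ q.2 ∧ p ∣ (q.1 - q.2)},
          Real.exp (-(Real.pi * y * ((μ:ℝ)+1))) * (Real.exp (Real.pi*((μ:ℝ)+1)) *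
            ‖zterm a b c p r t₁ t₂ (((1:ℝ):ℂ) * Complex.I) q.1.1 q.1.2‖) := by
        apply Summable.tsum_le_tsum _ hsn (((hsumP 1 one_pos).mul_left _).mul_left _)
        intro q
        by_cases hqb : q = b₀
        · rw [if_pos hqb, norm_zero]
          positivity
        · rw [if_neg hqb, zterm_norm, zterm_norm]
          have hQ : μ + 1 ≤ QZ a b c p t₁ t₂ q.1.1 q.1.2 := by
            have hb₀v : (b₀ : ℤ × ℤ) = ((0:ℤ),(0:ℤ)) := rfl
            have hne : ¬(q.1.1 = 0 ∧ q.1.2 = 0) := by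
              intro ⟨u, v⟩
              exact hqb (Subtype.ext (by rw [hb₀v]; exact Prod.ext u v))
            have h1 := q.2.1
            have h2 := q.2.2.1
            have := qz_lb_pos a b c p t₁ t₂ q.1.1 q.1.2 ha hb hc hp ht₁ ht₂ h1 h2
            omega
          exact exp_y_bound y hy1 μ _ hQ
      _ = Real.exp (-(Real.pi * y * ((μ:ℝ)+1))) * (Real.exp (Real.pi*((μ:ℝ)+1)) * V₁) := by
        rw [tsum_mul_left, tsum_mul_left]
  have hbndB : ‖B‖ ≤ Real.exp (-(Real.pi * y * ((μ:ℝ)+1))) * (Real.exp (Real.pi*((μ:ℝ)+1)) * V₂) := by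
    have hsn : Summable (fun q : {q : ℤ × ℤ // q.1 < 0 ∧ q.2 < 0 ∧ p ∣ (q.1 - q.2)} =>
        ‖if q = b₁ then 0 else zterm a b c p r t₁ t₂ ((y:ℝ) * Complex.I) q.1.1 q.1.2‖) := by
      apply Summable.of_nonneg_of_le (fun q => norm_nonneg _) _ (hsumM y hy0)
      intro q
      by_cases hqb : q = b₁ <;> simp [hqb]
    calc ‖B‖ ≤ ∑' q : {q : ℤ × ℤ // q.1 < 0 ∧ q.2 < 0 ∧ p ∣ (q.1 - q.2)},
          ‖if q = b₁ then 0 else zterm a b c p r t₁ t₂ ((y:ℝ) * Complex.I) q.1.1 q.1.2‖ :=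
        norm_tsum_le_tsum_norm hsn
      _ ≤ ∑' q : {q : ℤ × ℤ // q.1 < 0 ∧ q.2 < 0 ∧ p ∣ (q.1 - q.2)},
          Real.exp (-(Real.pi * y * ((μ:ℝ)+1))) * (Real.exp (Real.pi*((μ:ℝ)+1)) *
            ‖zterm a b c p r t₁ t₂ (((1:ℝ):ℂ) * Complex.I) q.1.1 q.1.2‖) := by
        apply Summable.tsum_le_tsum _ hsn (((hsumM 1 one_pos).mul_left _).mul_left _)
        intro q
        by_cases hqb : q = b₁
        · rw [if_pos hqb, norm_zero]
          positivity
        · rw [if_neg hqb, zterm_norm, zterm_norm]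
          have hQ : μ + 1 ≤ QZ a b c p t₁ t₂ q.1.1 q.1.2 := by
            have hb₁v : (b₁ : ℤ × ℤ) = ((-1:ℤ),(-1:ℤ)) := rfl
            have hne : ¬(-q.1.1 = 1 ∧ -q.1.2 = 1) := by
              intro ⟨u, v⟩
              exact hqb (Subtype.ext (by rw [hb₁v]; exact Prod.ext (by omega) (by omega)))
            have h1 := q.2.1
            have h2 := q.2.2.1
            have := hQ3 (-q.1.1) (-q.1.2) (by omega) (by omega) hne
            simpa [neg_neg] using this
          exact exp_y_bound y hy1 μ _ hQ
      _ = Real.exp (-(Real.pi * y * ((μ:ℝ)+1))) * (Real.exp (Real.pi*((μ:ℝ)+1)) * V₂) := by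
        rw [tsum_mul_left, tsum_mul_left]
  -- conclude
  set W : ℂ := 1 - zr * ((Real.exp (-(Real.pi * y * (E:ℝ))) : ℝ) : ℂ) with hW
  have eqS : S₁ - S₂ = W + (A - B) := by
    rw [eq1, eq2, hW]; ring
  have hWlow := hδW y hy1
  have hsplit : Real.exp (-(Real.pi * y * ((μ:ℝ)+1)))
      = Real.exp (-(Real.pi * y * (μ:ℝ))) * Real.exp (-(Real.pi * y)) := by
    rw [← Real.exp_add]
    congr 1
    ring
  have hlow2 : ‖W‖ - ‖A - B‖ ≤ ‖S₁ - S₂‖ := by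
    rw [eqS]
    calc ‖W‖ - ‖A - B‖ ≤ (‖W + (A - B)‖ + ‖A - B‖) - ‖A - B‖ := by
          have h9 : ‖W‖ ≤ ‖W + (A - B)‖ + ‖A - B‖ := by
            calc ‖W‖ = ‖(W + (A - B)) - (A - B)‖ := by ring_nf
              _ ≤ ‖W + (A - B)‖ + ‖A - B‖ := norm_sub_le _ _
          linarith
      _ = ‖W + (A - B)‖ := by ring
  have hABn : ‖A - B‖ ≤ Real.exp (-(Real.pi * y * (μ:ℝ))) * Real.exp (-(Real.pi * y)) * C := by
    calc ‖A - B‖ ≤ ‖A‖ + ‖B‖ := norm_sub_le _ _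
      _ ≤ Real.exp (-(Real.pi * y * ((μ:ℝ)+1))) * (Real.exp (Real.pi*((μ:ℝ)+1)) * V₁)
          + Real.exp (-(Real.pi * y * ((μ:ℝ)+1))) * (Real.exp (Real.pi*((μ:ℝ)+1)) * V₂) := by
        linarith
      _ = Real.exp (-(Real.pi * y * (μ:ℝ))) * Real.exp (-(Real.pi * y)) * C := by
        rw [hC, hsplit]; ring
  have hepos : 0 < Real.exp (-(Real.pi * y)) := Real.exp_pos _
  have hXpos : 0 < Real.exp (-(Real.pi * y * (μ:ℝ))) := Real.exp_pos _
  have hfinal : 0 < ‖S₁ - S₂‖ := by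
    have hCe2 : C * Real.exp (-(Real.pi * y)) ≤ δ - Real.exp (-(Real.pi * y)) := by nlinarith
    nlinarith [hWlow, hABn, hlow2, mul_pos hXpos hepos]
  intro hzero
  rw [hzero] at hfinal
  simp at hfinal
lemma hQ3_wrap (a b c p t₁ t₂ : ℤ) (ha : 1 ≤ a) (hb : 1 ≤ b) (hc : 1 ≤ c)
    (h₁ : p*a*t₁ ≤ 2*(a+b)) (h₂ : p*c*t₂ ≤ 2*(b+c)) :
    ∀ j k : ℤ, 1 ≤ j → 1 ≤ k → ¬(j = 1 ∧ k = 1) →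
      min 0 (QZ a b c p t₁ t₂ (-1) (-1)) + 1 ≤ QZ a b c p t₁ t₂ (-j) (-k) := by
  intro j k hj hk hne
  have h3 := q3_min a b c p t₁ t₂ j k ha hb hc h₁ h₂ hj hk hne
  have hm := min_le_right (0:ℤ) (QZ a b c p t₁ t₂ (-1) (-1))
  linarith

lemma pos_factor (x z : ℤ) {w : ℤ} (hx : 0 < x) (hxz : x * w = z) (hz : 0 < z) : 0 < w := by
  by_contra hw
  push_neg at hw
  nlinarith [mul_nonpos_of_nonneg_of_nonpos hx.le hw]


/-- Theorem `nonvan`: under either of the two arithmetic conditions on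
`(s₁+s₂)/2` and `r`, some shift `f_{s₁+2(h/p)l₁, s₂+2(h/p)l₂}` is not identically zero,
where `h = gcd(b/a+1, b/c+1)`. -/
theorem stmt11 (a b c p s₁ s₂ r : ℤ) (ha : 0 < a) (hb : 0 < b) (hc : 0 < c) (hp : 0 < p)
    (hab : a ∣ b) (hcb : c ∣ b) (hpa : p ∣ (b / a + 1)) (hpc : p ∣ (b / c + 1))
    (hD : 0 < b ^ 2 - a * c) (hs₁ : Odd s₁) (hs₂ : Odd s₂)
    (h : ℤ) (hdef : h = Int.gcd (b / a + 1) (b / c + 1))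
    (hyp : (¬∃ k : ℤ, ((s₁ : ℚ) + (s₂ : ℚ)) / 2 = (h : ℚ) / (p : ℚ) * (k : ℚ)) ∨
      (¬∃ k l : ℤ, (r : ℚ) =
        ((h : ℚ) + (p : ℚ)) * (2 * (b : ℚ) + (a : ℚ) + (c : ℚ)) / (2 * (h : ℚ) * (b : ℚ)) +
          (p : ℚ) / (b : ℚ) * ((a : ℚ) * (k : ℚ) + (c : ℚ) * (l : ℚ)))) :
    ∃ l₁ l₂ : ℤ, ∃ τ₀ : ℂ, 0 < τ₀.im ∧
      fnv a b c p r (s₁ + 2 * (h / p) * l₁) (s₂ + 2 * (h / p) * l₂) τ₀ ≠ 0 := by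
  classical
  obtain ⟨β, hβ⟩ := hab
  obtain ⟨γ, hγ⟩ := hcb
  have hba : b / a = β := by rw [hβ]; exact Int.mul_ediv_cancel_left β (by omega)
  have hbc : b / c = γ := by rw [hγ]; exact Int.mul_ediv_cancel_left γ (by omega)
  rw [hba] at hpa hdef
  rw [hbc] at hpc hdef
  have hβ1 : 1 ≤ β := by
    have := pos_factor a b ha hβ.symm hb
    omega
  have hγ1 : 1 ≤ γ := by
    have := pos_factor c b hc hγ.symm hb
    omega
  have hph : p ∣ h := by rw [hdef]; exact Int.dvd_coe_gcd hpa hpc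
  have hhB₁ : h ∣ β + 1 := by rw [hdef]; exact Int.gcd_dvd_left _ _
  have hhB₂ : h ∣ γ + 1 := by rw [hdef]; exact Int.gcd_dvd_right _ _
  have hhpos : 0 < h := by
    rw [hdef]
    exact_mod_cast Int.natCast_pos.2 (Int.gcd_pos_iff.2 (Or.inl (by omega)))
  set H : ℤ := h / p with hHdef
  have hpH : p * H = h := Int.mul_ediv_cancel' hph
  have hH1 : 1 ≤ H := pos_factor p h hp hpH hhpos
  have hhB₁le : h ≤ β + 1 := Int.le_of_dvd (by omega) hhB₁
  have hhB₂le : h ≤ γ + 1 := Int.le_of_dvd (by omega) hhB₂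
  -- canonical representatives
  set l₁ : ℤ := -((s₁ - 1) / (2 * H)) with hl₁
  set l₂ : ℤ := -((s₂ - 1) / (2 * H)) with hl₂
  set σ₁ : ℤ := s₁ + 2 * H * l₁ with hσ₁
  set σ₂ : ℤ := s₂ + 2 * H * l₂ with hσ₂
  have hσ₁v : σ₁ = (s₁ - 1) % (2*H) + 1 := by
    have key := Int.emod_add_mul_ediv (s₁ - 1) (2*H)
    rw [hσ₁, hl₁]
    linear_combination -key
  have hσ₂v : σ₂ = (s₂ - 1) % (2*H) + 1 := by
    have key := Int.emod_add_mul_ediv (s₂ - 1) (2*H)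
    rw [hσ₂, hl₂]
    linear_combination -key
  have hσ₁lb : 1 ≤ σ₁ := by
    have := Int.emod_nonneg (s₁ - 1) (show (2*H) ≠ 0 by omega)
    omega
  have hσ₂lb : 1 ≤ σ₂ := by
    have := Int.emod_nonneg (s₂ - 1) (show (2*H) ≠ 0 by omega)
    omega
  have hσ₁ub : σ₁ ≤ 2*H := by
    have := Int.emod_lt_of_pos (s₁ - 1) (show (0:ℤ) < 2*H by omega)
    omega
  have hσ₂ub : σ₂ ≤ 2*H := by
    have := Int.emod_lt_of_pos (s₂ - 1) (show (0:ℤ) < 2*H by omega)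
    omega
  -- bounds for q3_min
  have hbd₁ : p*a*σ₁ ≤ 2*(a+b) := by
    have e1 : p * σ₁ ≤ 2*h := by
      have := mul_le_mul_of_nonneg_left hσ₁ub (show (0:ℤ) ≤ p by omega)
      linarith [hpH]
    have e2 : a * (p*σ₁) ≤ a * (2*h) := mul_le_mul_of_nonneg_left e1 (by omega)
    have e3 : a * (2*h) ≤ a * (2*(β+1)) := mul_le_mul_of_nonneg_left (by omega) (by omega)
    nlinarith [hβ]
  have hbd₂ : p*c*σ₂ ≤ 2*(b+c) := by
    have e1 : p * σ₂ ≤ 2*h := by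
      have := mul_le_mul_of_nonneg_left hσ₂ub (show (0:ℤ) ≤ p by omega)
      linarith [hpH]
    have e2 : c * (p*σ₂) ≤ c * (2*h) := mul_le_mul_of_nonneg_left e1 (by omega)
    have e3 : c * (2*h) ≤ c * (2*(γ+1)) := mul_le_mul_of_nonneg_left (by omega) (by omega)
    nlinarith [hγ]
  have hEval : QZ a b c p σ₁ σ₂ (-1) (-1) = 2*b + a*(1-p*σ₁) + c*(1-p*σ₂) := by
    unfold QZ; ring
  rcases lt_trichotomy (2*b + a*(1-p*σ₁) + c*(1-p*σ₂)) 0 with hE | hE | hE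
  · -- E < 0
    refine ⟨l₁, l₂, ?_⟩
    rw [← hσ₁, ← hσ₂]
    exact master a b c p r σ₁ σ₂ (by omega) (by omega) (by omega) (by omega) hσ₁lb hσ₂lb
      (hQ3_wrap a b c p σ₁ σ₂ (by omega) (by omega) (by omega) hbd₁ hbd₂)
      (Or.inr (Or.inl (by omega)))
  · -- E = 0
    rcases eq_or_ne (β + 1) h with hB1 | hB1
    · rcases eq_or_ne (γ + 1) h with hB2 | hB2
      · -- hard case: a = c, b = a*(h-1)
        have hac : a = c := by
          have e1 : a * (h - 1) = b := by rw [hβ]; rw [← hB1]; ring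
          have e2 : c * (h - 1) = b := by rw [hγ]; rw [← hB2]; ring
          have hne : h - 1 ≠ 0 := by omega
          have := e1.trans e2.symm
          exact mul_right_cancel₀ hne this
        have hbval : a * (h - 1) = b := by rw [hβ]; rw [← hB1]; ring
        have hh2 : 2 ≤ h := by omega
        by_cases hpr : p ∣ r
        · -- contradiction with hyp
          exfalso
          have hsum : σ₁ + σ₂ = 2*H := by
            have e0 : a * (2*h - p*(σ₁+σ₂)) = 0 := by
              rw [← hac] at hE
              nlinarith [hE, hbval]
            have e1 : 2*h - p*(σ₁+σ₂) = 0 := by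
              rcases mul_eq_zero.1 e0 with h' | h'
              · omega
              · exact h'
            have e2 : p * (σ₁ + σ₂) = p * (2*H) := by linear_combination -e1 - 2*hpH
            have := mul_left_cancel₀ (show p ≠ 0 by omega) e2
            omega
          rcases hyp with hyp1 | hyp2
          · apply hyp1
            refine ⟨1 - l₁ - l₂, ?_⟩
            have hs : s₁ + s₂ = 2*H*(1 - l₁ - l₂) := by linear_combination hsum - hσ₁ - hσ₂
            have hsQ : (s₁:ℚ) + s₂ = 2*(H:ℚ)*(1 - l₁ - l₂) := by exact_mod_cast hs
            have hQh : (h:ℚ) = (p:ℚ) * (H:ℚ) := by exact_mod_cast hpH.symm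
            have hp0 : (p:ℚ) ≠ 0 := by exact_mod_cast (show p ≠ 0 by omega)
            push_cast
            rw [hQh]
            field_simp
            linear_combination hsQ
          · apply hyp2
            obtain ⟨ρ, hρ⟩ := hpr
            refine ⟨ρ*(h-1) - H - 1, 0, ?_⟩
            have hb0 : (b:ℚ) ≠ 0 := by exact_mod_cast (show b ≠ 0 by omega)
            have hh0 : (h:ℚ) ≠ 0 := by exact_mod_cast (show h ≠ 0 by omega)
            have hZ : r * (2*h*b) = (h+p)*(2*b+a+c) + 2*h*p*(a*(ρ*(h-1) - H - 1)) := by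
              rw [hρ, ← hbval, ← hac]
              linear_combination (2*a*h) * hpH
            have hZQ : (r:ℚ) * (2*(h:ℚ)*(b:ℚ)) = ((h:ℚ)+(p:ℚ))*(2*(b:ℚ)+(a:ℚ)+(c:ℚ))
                + 2*(h:ℚ)*(p:ℚ)*((a:ℚ)*((ρ:ℚ)*((h:ℚ)-1) - (H:ℚ) - 1)) := by exact_mod_cast hZ
            have h2hb : (2*(h:ℚ)*(b:ℚ)) ≠ 0 := by
              intro hzz
              rcases mul_eq_zero.1 hzz with hzz1 | hzz1
              · rcases mul_eq_zero.1 hzz1 with hzz2 | hzz2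
                · norm_num at hzz2
                · exact hh0 hzz2
              · exact hb0 hzz1
            push_cast
            rw [div_mul_eq_mul_div, div_add_div _ _ h2hb hb0, eq_div_iff (mul_ne_zero h2hb hb0)]
            linear_combination (b:ℚ) * hZQ
        · -- p ∤ r : use σ's with E = 0
          refine ⟨l₁, l₂, ?_⟩
          rw [← hσ₁, ← hσ₂]
          exact master a b c p r σ₁ σ₂ (by omega) (by omega) (by omega) (by omega) hσ₁lb hσ₂lb
            (hQ3_wrap a b c p σ₁ σ₂ (by omega) (by omega) (by omega) hbd₁ hbd₂)
            (Or.inr (Or.inr ⟨by omega, hpr⟩))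
      · -- shift t₂
        have h2h : 2*h ≤ γ + 1 := by
          obtain ⟨α, hα⟩ := hhB₂
          have hα1 : 0 < α := pos_factor h (γ+1) hhpos hα.symm (by omega)
          have hα2 : α ≠ 1 := by
            intro h1
            rw [h1, mul_one] at hα
            exact hB2 hα
          nlinarith [hα, mul_le_mul_of_nonneg_left (show (2:ℤ) ≤ α by omega) hhpos.le]
        have hbd₂' : p*c*(σ₂ + 2*H) ≤ 2*(b+c) := by
          have e1 : p * (σ₂ + 2*H) ≤ 4*h := by
            have := mul_le_mul_of_nonneg_left hσ₂ub (show (0:ℤ) ≤ p by omega)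
            nlinarith [hpH]
          have e2 : c * (p*(σ₂+2*H)) ≤ c * (4*h) := mul_le_mul_of_nonneg_left e1 (by omega)
          have e3 : c * (4*h) ≤ c * (2*(γ+1)) := mul_le_mul_of_nonneg_left (by omega) (by omega)
          nlinarith [hγ]
        refine ⟨l₁, l₂ + 1, ?_⟩
        have harg : s₂ + 2 * H * (l₂ + 1) = σ₂ + 2*H := by rw [hσ₂]; ring
        rw [← hσ₁, harg]
        have hE' : QZ a b c p σ₁ (σ₂ + 2*H) (-1) (-1) = (2*b + a*(1-p*σ₁) + c*(1-p*σ₂)) - 2*c*(p*H) := by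
          unfold QZ; ring
        refine master a b c p r σ₁ (σ₂ + 2*H) (by omega) (by omega) (by omega) (by omega) hσ₁lb (by omega)
          (hQ3_wrap a b c p σ₁ (σ₂ + 2*H) (by omega) (by omega) (by omega) hbd₁ hbd₂')
          (Or.inr (Or.inl ?_))
        rw [hE', hpH]
        nlinarith [hE]
    · -- shift t₁
      have h2h : 2*h ≤ β + 1 := by
        obtain ⟨α, hα⟩ := hhB₁
        have hα1 : 0 < α := pos_factor h (β+1) hhpos hα.symm (by omega)
        have hα2 : α ≠ 1 := by
          intro h1
          rw [h1, mul_one] at hα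
          exact hB1 hα
        nlinarith [hα, mul_le_mul_of_nonneg_left (show (2:ℤ) ≤ α by omega) hhpos.le]
      have hbd₁' : p*a*(σ₁ + 2*H) ≤ 2*(a+b) := by
        have e1 : p * (σ₁ + 2*H) ≤ 4*h := by
          have := mul_le_mul_of_nonneg_left hσ₁ub (show (0:ℤ) ≤ p by omega)
          nlinarith [hpH]
        have e2 : a * (p*(σ₁+2*H)) ≤ a * (4*h) := mul_le_mul_of_nonneg_left e1 (by omega)
        have e3 : a * (4*h) ≤ a * (2*(β+1)) := mul_le_mul_of_nonneg_left (by omega) (by omega)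
        nlinarith [hβ]
      refine ⟨l₁ + 1, l₂, ?_⟩
      have harg : s₁ + 2 * H * (l₁ + 1) = σ₁ + 2*H := by rw [hσ₁]; ring
      rw [harg, ← hσ₂]
      have hE' : QZ a b c p (σ₁ + 2*H) σ₂ (-1) (-1) = (2*b + a*(1-p*σ₁) + c*(1-p*σ₂)) - 2*a*(p*H) := by
        unfold QZ; ring
      refine master a b c p r (σ₁ + 2*H) σ₂ (by omega) (by omega) (by omega) (by omega) (by omega) hσ₂lb
        (hQ3_wrap a b c p (σ₁ + 2*H) σ₂ (by omega) (by omega) (by omega) hbd₁' hbd₂)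
        (Or.inr (Or.inl ?_))
      rw [hE', hpH]
      nlinarith [hE]
  · -- E > 0
    refine ⟨l₁, l₂, ?_⟩
    rw [← hσ₁, ← hσ₂]
    exact master a b c p r σ₁ σ₂ (by omega) (by omega) (by omega) (by omega) hσ₁lb hσ₂lb
      (hQ3_wrap a b c p σ₁ σ₂ (by omega) (by omega) (by omega) hbd₁ hbd₂)
      (Or.inl (by omega))
end
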